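/- Let A, B, C be three non-collinear points in the Euclidean plane, with incenter I and excenter E_A opposite A. Then the inversion with center A and radius √(dist(A,B)·dist(A,C)) maps the incenter I to the excenter E_A (and hence maps E_A to I). -/

import Mathlib

open EuclideanGeometry
open scoped RealInnerProductSpace

/-- The incenter of the triangle `A B C`. -/
noncomputable def incenterPt (A B C : EuclideanSpace ℝ (Fin 2)) : EuclideanSpace ℝ (Fin 2) :=
  (dist B C + dist C A + dist A B)⁻¹ •
    (dist B C • A + dist C A • B + dist A B • C)

/-- The excenter of the triangle `A B C` opposite the first vertex `A`. -/
noncomputable def excenterPt (A B C : EuclideanSpace ℝ (Fin 2)) : EuclideanSpace ℝ (Fin 2) :=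
  (-dist B C + dist C A + dist A B)⁻¹ •
    ((-dist B C) • A + dist C A • B + dist A B • C)

/-- The inversion with center `A` and radius `√(|AB|·|AC|)` maps the incenter `I`
to the excenter `E_A` opposite `A` (and hence `E_A` to `I`). -/
theorem inversion_incenter_eq_excenter (A B C : EuclideanSpace ℝ (Fin 2))
    (h : AffineIndependent ℝ ![A, B, C]) :
    inversion A (Real.sqrt (dist A B * dist A C)) (incenterPt A B C) = excenterPt A B C := by
  rw [affineIndependent_iff_not_collinear_set] at h
  rw [dist_comm A C]
  set a := dist B C with ha
  set b := dist C A with hb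
  set c := dist A B with hc
  have hAB : A ≠ B := by
    rintro rfl
    refine h ?_
    have e : ({A, A, C} : Set (EuclideanSpace ℝ (Fin 2))) = {A, C} := by
      ext x; simp; try tauto
    rw [e]; exact collinear_pair ℝ A C
  have hCA : C ≠ A := by
    rintro rfl
    refine h ?_
    have e : ({C, B, C} : Set (EuclideanSpace ℝ (Fin 2))) = {C, B} := by
      ext x; simp; try tauto
    rw [e]; exact collinear_pair ℝ C B
  have hBC : B ≠ C := by
    rintro rfl
    refine h ?_
    have e : ({A, B, B} : Set (EuclideanSpace ℝ (Fin 2))) = {A, B} := by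
      ext x; simp; try tauto
    rw [e]; exact collinear_pair ℝ A B
  have hb0 : 0 < b := dist_pos.2 hCA
  have hc0 : 0 < c := dist_pos.2 hAB
  have ha0 : 0 < a := dist_pos.2 hBC
  have htri : a < b + c := by
    rcases (dist_triangle B A C).lt_or_eq with h1 | h1
    · rw [dist_comm B A] at h1; rw [ha, hb, hc]; rw [dist_comm C A]; linarith
    · exfalso
      have hw : Wbtw ℝ B A C := dist_add_dist_eq_iff.mp h1.symm
      refine h ?_
      have e : ({A, B, C} : Set (EuclideanSpace ℝ (Fin 2))) = {B, A, C} := by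
        ext x; simp; try tauto
      rw [e]; exact hw.collinear
  set s : ℝ := a + b + c with hs
  set t : ℝ := -a + b + c with ht
  have hs0 : 0 < s := by positivity
  have ht0 : 0 < t := by rw [ht]; linarith
  set v : EuclideanSpace ℝ (Fin 2) := b • (B - A) + c • (C - A) with hv
  have hI : incenterPt A B C = s⁻¹ • v + A := by
    have key : a • A + b • B + c • C = v + s • A := by
      rw [hv, hs]; module
    simp only [incenterPt, ← ha, ← hb, ← hc, ← hs]
    rw [key, smul_add, inv_smul_smul₀ hs0.ne']
  have hE : excenterPt A B C = t⁻¹ • v + A := by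
    have key : (-a) • A + b • B + c • C = v + t • A := by
      rw [hv, ht]; module
    simp only [excenterPt, ← ha, ← hb, ← hc, ← ht]
    rw [key, smul_add, inv_smul_smul₀ ht0.ne']
  have hu2 : (inner ℝ (B - A) (B - A) : ℝ) = c ^ 2 := by
    rw [real_inner_self_eq_norm_sq, ← dist_eq_norm, dist_comm B A, ← hc]
  have hw2 : (inner ℝ (C - A) (C - A) : ℝ) = b ^ 2 := by
    rw [real_inner_self_eq_norm_sq, ← dist_eq_norm, ← hb]
  have huw : (inner ℝ (B - A) (C - A) : ℝ) = (b ^ 2 + c ^ 2 - a ^ 2) / 2 := by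
    have hBC2 : (inner ℝ (B - C) (B - C) : ℝ) = a ^ 2 := by
      rw [real_inner_self_eq_norm_sq, ← dist_eq_norm, ← ha]
    have e : B - C = (B - A) - (C - A) := by abel
    rw [e, inner_sub_sub_self, hu2, hw2] at hBC2
    have hcomm := real_inner_comm (C - A) (B - A)
    linarith [hcomm]
  have hv2 : ‖v‖ ^ 2 = b * c * t * s := by
    rw [← real_inner_self_eq_norm_sq, hv, inner_add_add_self]
    simp only [real_inner_smul_left, real_inner_smul_right]
    have hcomm : (inner ℝ (C - A) (B - A) : ℝ) = (b ^ 2 + c ^ 2 - a ^ 2) / 2 := by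
      rw [real_inner_comm]; exact huw
    rw [hu2, hw2, huw, hcomm, hs, ht]
    ring
  have hvn : ‖v‖ ≠ 0 := by
    intro e
    rw [e] at hv2
    nlinarith [mul_pos (mul_pos (mul_pos hb0 hc0) ht0) hs0]
  have hdI : dist (incenterPt A B C) A = s⁻¹ * ‖v‖ := by
    rw [hI, dist_eq_norm, add_sub_cancel_right, norm_smul, norm_inv, Real.norm_eq_abs,
      abs_of_pos hs0]
  have hIA : incenterPt A B C -ᵥ A = s⁻¹ • v := by
    rw [hI]; simp [vsub_eq_sub]
  rw [hE]
  simp only [inversion, hdI, hIA, vadd_eq_add]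
  congr 1
  rw [smul_smul]
  congr 1
  rw [div_pow, Real.sq_sqrt (by positivity : (0:ℝ) ≤ c * b), mul_pow, hv2]
  field_simp
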